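/- For all nonnegative integers i, j, N, the following two products of quantum binomials are equal: [i+j choose i]_q [N−1−(i+j) choose N−i]_q [−1 choose i]_q [N choose j]_q = [i+j choose j]_q [N−1−(i+j) choose N−j]_q [−1 choose j]_q [N choose i]_q. (This is the symmetry in i and j used in the proof of invariance of Q_{N|1} under conjugation by σ₁.) -/

import Mathlib

open Finset

noncomputable def q : RatFunc ℚ := RatFunc.X

noncomputable def qint (n : ℤ) : RatFunc ℚ := (q ^ n - q ^ (-n)) / (q - q⁻¹)

noncomputable def qbin (n k : ℤ) : RatFunc ℚ :=
  if k < 0 then 0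
  else (∏ i ∈ Finset.range k.toNat, qint (n - i)) /
       (∏ i ∈ Finset.range k.toNat, qint (i + 1))

noncomputable def qfac (k : ℕ) : RatFunc ℚ := ∏ s ∈ Finset.range k, qint (s + 1)

lemma q_ne_zero : q ≠ 0 := RatFunc.X_ne_zero

lemma q_pow_ne_one (k : ℕ) (hk : k ≠ 0) : q ^ k ≠ 1 := by
  intro h
  have hd : ∀ m : ℕ, (q ^ m).intDegree = m := by
    intro m; induction m with
    | zero => simpa using RatFunc.intDegree_one
    | succ n ih =>
        rw [pow_succ, RatFunc.intDegree_mul (pow_ne_zero _ q_ne_zero) q_ne_zero, ih]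
        show (n : ℤ) + RatFunc.X.intDegree = ((n + 1 : ℕ) : ℤ)
        rw [RatFunc.intDegree_X]; push_cast; ring
  have h2 := hd k
  rw [h, RatFunc.intDegree_one] at h2
  exact hk (by exact_mod_cast h2.symm)

lemma q_zpow_ne_one (m : ℤ) (hm : m ≠ 0) : q ^ m ≠ 1 := by
  intro h
  rcases m with n | n
  · exact q_pow_ne_one n (by simpa using hm) (by simpa using h)
  · have h1 : (q ^ (n + 1 : ℕ))⁻¹ = 1 := by rw [← h]; simp [zpow_negSucc]
    exact q_pow_ne_one (n + 1) (by omega) (inv_eq_one.mp h1)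

lemma qint_ne_zero (n : ℤ) (hn : n ≠ 0) : qint n ≠ 0 := by
  apply div_ne_zero
  · rw [sub_ne_zero]
    intro h
    have : q ^ (n + n) = 1 := by
      rw [zpow_add₀ q_ne_zero]
      nth_rewrite 1 [h]
      rw [← zpow_add₀ q_ne_zero]
      simp
    exact q_zpow_ne_one (n + n) (by omega) this
  · rw [sub_ne_zero]
    intro h
    have : q ^ (2 : ℕ) = 1 := by
      rw [sq]
      nth_rewrite 2 [h]
      exact mul_inv_cancel₀ q_ne_zero
    exact q_pow_ne_one 2 (by omega) this

lemma qint_zero : qint 0 = 0 := by simp [qint]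

lemma qint_neg (n : ℤ) : qint (-n) = - qint n := by
  rw [qint, qint, neg_neg, ← neg_sub, neg_div]

lemma qfac_ne_zero (k : ℕ) : qfac k ≠ 0 :=
  Finset.prod_ne_zero_iff.mpr fun s _ => qint_ne_zero _ (by omega)

lemma qbin_k_neg (n k : ℤ) (h : k < 0) : qbin n k = 0 := by simp [qbin, h]

lemma qbin_nat_zero (M K : ℕ) (h : M < K) : qbin (M : ℤ) (K : ℤ) = 0 := by
  rw [qbin, if_neg (by omega)]
  have : (∏ i ∈ Finset.range ((K : ℤ)).toNat, qint ((M : ℤ) - i)) = 0 := by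
    apply Finset.prod_eq_zero (i := M)
    · simp [h]
    · rw [sub_self, qint_zero]
  rw [this, zero_div]

lemma qbin_nat (M K : ℕ) (h : K ≤ M) :
    qbin (M : ℤ) (K : ℤ) = qfac M / (qfac K * qfac (M - K)) := by
  rw [qbin, if_neg (by omega)]
  have ht : ((K : ℤ)).toNat = K := by omega
  rw [ht]
  have key : (∏ i ∈ Finset.range K, qint ((M : ℤ) - i)) * qfac (M - K) = qfac M := by
    set d := M - K with hd
    rw [← Finset.prod_range_reflect (fun i => qint ((M : ℤ) - i)) K]
    have h1 : ∀ i ∈ Finset.range K, qint ((M : ℤ) - ((K - 1 - i : ℕ) : ℤ)) = qint ((d + i : ℕ) + 1) := by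
      intro i hi
      rw [Finset.mem_range] at hi
      congr 1
      omega
    rw [Finset.prod_congr rfl h1]
    have h2 : M = d + K := by omega
    rw [h2]
    simp only [qfac]
    rw [Finset.prod_range_add, mul_comm]
  have hK := qfac_ne_zero K
  have hMK := qfac_ne_zero (M - K)
  have hden : (∏ i ∈ Finset.range K, qint ((i : ℤ) + 1)) = qfac K := rfl
  rw [hden, div_eq_div_iff hK (by exact mul_ne_zero hK hMK)]
  calc (∏ i ∈ Finset.range K, qint ((M : ℤ) - i)) * (qfac K * qfac (M - K))
      = ((∏ i ∈ Finset.range K, qint ((M : ℤ) - i)) * qfac (M - K)) * qfac K := by ring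
    _ = qfac M * qfac K := by rw [key]

lemma qbin_neg (m K : ℕ) : qbin (-((m : ℤ) + 1)) (K : ℤ) =
    (-1) ^ K * (qfac (m + K) / (qfac K * qfac m)) := by
  rw [qbin, if_neg (by omega)]
  have ht : ((K : ℤ)).toNat = K := by omega
  rw [ht]
  have h1 : ∀ i ∈ Finset.range K, qint (-((m : ℤ) + 1) - i) = - qint ((m + i : ℕ) + 1) := by
    intro i hi
    rw [show (-((m : ℤ) + 1) - i) = -(((m + i : ℕ) : ℤ) + 1) by push_cast; ring, qint_neg]
  rw [Finset.prod_congr rfl h1]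
  have h2 : qfac m * (∏ i ∈ Finset.range K, qint ((m + i : ℕ) + 1)) = qfac (m + K) := by
    simp only [qfac]
    rw [Finset.prod_range_add]
  rw [← h2]
  have hm := qfac_ne_zero m
  have hden : (∏ i ∈ Finset.range K, qint ((i : ℤ) + 1)) = qfac K := rfl
  have hneg : (∏ i ∈ Finset.range K, -qint ((m + i : ℕ) + 1)) =
      (-1) ^ K * ∏ i ∈ Finset.range K, qint ((m + i : ℕ) + 1) := by
    calc (∏ i ∈ Finset.range K, -qint ((m + i : ℕ) + 1))
        = ∏ i ∈ Finset.range K, ((-1) * qint ((m + i : ℕ) + 1)) :=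
          Finset.prod_congr rfl (fun i _ => by ring)
      _ = (∏ _i ∈ Finset.range K, (-1 : RatFunc ℚ)) *
            ∏ i ∈ Finset.range K, qint ((m + i : ℕ) + 1) := Finset.prod_mul_distrib
      _ = (-1) ^ K * ∏ i ∈ Finset.range K, qint ((m + i : ℕ) + 1) := by
          rw [Finset.prod_const, Finset.card_range]
  rw [hneg, hden, mul_div_assoc]
  congr 1
  rw [mul_comm (qfac K) (qfac m), mul_div_mul_left _ _ hm]

lemma qbin_neg_one (K : ℕ) : qbin (-1) (K : ℤ) = (-1) ^ K := by
  have := qbin_neg 0 K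
  rw [show (-(((0 : ℕ) : ℤ) + 1)) = (-1 : ℤ) by norm_num] at this
  rw [this]
  rw [show (0 + K) = K by omega, show qfac 0 = 1 by simp [qfac]]
  rw [mul_one, div_self (qfac_ne_zero K), mul_one]

theorem qbin_symmetry_sigma1 (i j N : ℕ) :
    qbin ((i : ℤ) + j) i * qbin ((N : ℤ) - 1 - ((i : ℤ) + j)) ((N : ℤ) - i) *
        qbin (-1) i * qbin N j =
      qbin ((i : ℤ) + j) j * qbin ((N : ℤ) - 1 - ((i : ℤ) + j)) ((N : ℤ) - j) *
        qbin (-1) j * qbin N i := by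
  rcases lt_or_ge N i with hiN | hi
  · rw [qbin_k_neg _ _ (by omega : (N : ℤ) - i < 0), qbin_nat_zero N i hiN]
    ring
  rcases lt_or_ge N j with hjN | hj
  · rw [qbin_k_neg _ _ (by omega : (N : ℤ) - j < 0), qbin_nat_zero N j hjN]
    ring
  rcases lt_or_ge (i + j) N with hij | hij
  · rw [show ((N : ℤ) - 1 - ((i : ℤ) + j)) = ((N - 1 - (i + j) : ℕ) : ℤ) by omega,
      show ((N : ℤ) - i) = ((N - i : ℕ) : ℤ) by omega,
      show ((N : ℤ) - j) = ((N - j : ℕ) : ℤ) by omega,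
      qbin_nat_zero (N - 1 - (i + j)) (N - i) (by omega),
      qbin_nat_zero (N - 1 - (i + j)) (N - j) (by omega)]
    ring
  · set m := i + j - N with hm
    rw [show ((i : ℤ) + j) = ((i + j : ℕ) : ℤ) by push_cast; ring,
      show ((N : ℤ) - 1 - (((i + j : ℕ) : ℕ) : ℤ)) = -((m : ℤ) + 1) by omega,
      show ((N : ℤ) - i) = ((N - i : ℕ) : ℤ) by omega,
      show ((N : ℤ) - j) = ((N - j : ℕ) : ℤ) by omega,
      qbin_nat (i + j) i (by omega), qbin_nat (i + j) j (by omega),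
      qbin_neg m (N - i), qbin_neg m (N - j), qbin_neg_one, qbin_neg_one,
      qbin_nat N j hj, qbin_nat N i hi,
      show i + j - i = j by omega, show i + j - j = i by omega,
      show m + (N - i) = j by omega, show m + (N - j) = i by omega]
    have s1 : ((-1 : RatFunc ℚ)) ^ (N - i) * (-1) ^ i = (-1) ^ N := by
      rw [← pow_add]; congr 1; omega
    have s2 : ((-1 : RatFunc ℚ)) ^ (N - j) * (-1) ^ j = (-1) ^ N := by
      rw [← pow_add]; congr 1; omega
    have key : qfac (i + j) / (qfac i * qfac j) * (qfac j / (qfac (N - i) * qfac m)) *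
          (qfac N / (qfac j * qfac (N - j))) =
        qfac (i + j) / (qfac j * qfac i) * (qfac i / (qfac (N - j) * qfac m)) *
          (qfac N / (qfac i * qfac (N - i))) := by
      have h1 := qfac_ne_zero i
      have h2 := qfac_ne_zero j
      have h3 := qfac_ne_zero (N - i)
      have h4 := qfac_ne_zero (N - j)
      have h5 := qfac_ne_zero m
      field_simp
    calc qfac (i + j) / (qfac i * qfac j) *
          ((-1) ^ (N - i) * (qfac j / (qfac (N - i) * qfac m))) * (-1) ^ i *
          (qfac N / (qfac j * qfac (N - j)))
        = ((-1 : RatFunc ℚ)) ^ (N - i) * (-1) ^ i *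
            (qfac (i + j) / (qfac i * qfac j) * (qfac j / (qfac (N - i) * qfac m)) *
              (qfac N / (qfac j * qfac (N - j)))) := by ring
      _ = ((-1 : RatFunc ℚ)) ^ N *
            (qfac (i + j) / (qfac i * qfac j) * (qfac j / (qfac (N - i) * qfac m)) *
              (qfac N / (qfac j * qfac (N - j)))) := by rw [s1]
      _ = ((-1 : RatFunc ℚ)) ^ N *
            (qfac (i + j) / (qfac j * qfac i) * (qfac i / (qfac (N - j) * qfac m)) *
              (qfac N / (qfac i * qfac (N - i)))) := by rw [key]
      _ = ((-1 : RatFunc ℚ)) ^ (N - j) * (-1) ^ j *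
            (qfac (i + j) / (qfac j * qfac i) * (qfac i / (qfac (N - j) * qfac m)) *
              (qfac N / (qfac i * qfac (N - i)))) := by rw [s2]
      _ = qfac (i + j) / (qfac j * qfac i) *
            ((-1) ^ (N - j) * (qfac i / (qfac (N - j) * qfac m))) * (-1) ^ j *
            (qfac N / (qfac i * qfac (N - i))) := by ring
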